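/- Let H be a cocommutative Hopf algebra over k, M a left-left SAYD module over H, and ψ: M → M⊗M a k-linear map satisfying ψ(h·m) = Δ(h)·ψ(m) for all h∈H, m∈M (where H⊗H acts componentwise on M⊗M). Then for each n the map ρₙ = Ωₙ∘(Δ^{⊗(n+1)}⊗ψ), which sends h₀⊗⋯⊗hₙ⊗m to (h₀⁽¹⁾⊗⋯⊗hₙ⁽¹⁾⊗m₍₁₎) ⊗ (h₀⁽²⁾⊗⋯⊗hₙ⁽²⁾⊗m₍₂₎), commutes with all the cyclic structure maps: ρ∘δᵢ = (δᵢ⊗δᵢ)∘ρ for all faces 0≤i≤n (including δₙ), ρ∘σᵢ = (σᵢ⊗σᵢ)∘ρ for all degeneracies, and ρ∘τₙ = (τₙ⊗τₙ)∘ρ; hence ρ defines a map of cyclic modules C̃(H,M) → C̃(H,M) × C̃(H,M). -/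

import Mathlib

/-!
Statement 10: Let `H` be a cocommutative Hopf algebra over a field `k` of
characteristic zero, `M` a left-left SAYD module over `H`, and `ψ : M → M ⊗ M` a
linear map satisfying `ψ(h·m) = Δ(h)·ψ(m)` (with `H ⊗ H` acting componentwise on
`M ⊗ M`).  Then for each `n` the map `ρₙ = Ωₙ ∘ (Δ^{⊗(n+1)} ⊗ ψ)`, sending
`h₀⊗⋯⊗hₙ⊗m` to `(h₀⁽¹⁾⊗⋯⊗hₙ⁽¹⁾⊗m₍₁₎) ⊗ (h₀⁽²⁾⊗⋯⊗hₙ⁽²⁾⊗m₍₂₎)`, commutes with all the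
cyclic structure maps: all faces (including the last face), all degeneracies, and the
cyclic operators; hence `ρ` defines a map of cyclic modules
`C̃(H,M) → C̃(H,M) × C̃(H,M)`.
-/

open TensorProduct

noncomputable section

namespace HopfCyclicStmt

variable (k : Type) [Field k]

/-! ### Iterated tensor powers and basic operations -/

section TP
variable (A : Type) [Ring A] [Algebra k A]

/-- Bundled iterated tensor powers of `A` over `k` (right-nested). -/
def TPobj : ℕ → ModuleCat k
  | 0 => ModuleCat.of k k
  | n + 1 => ModuleCat.of k (A ⊗[k] (TPobj n))

/-- `TP k A n` is the `n`-fold tensor power `A ⊗ ⋯ ⊗ A` of `A` over `k`,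
with `TP k A 0 = k` and `TP k A (n+1) = A ⊗ TP k A n`. -/
def TP (n : ℕ) : Type := TPobj k A n

instance (n : ℕ) : AddCommGroup (TP k A n) := inferInstanceAs (AddCommGroup (TPobj k A n))
instance (n : ℕ) : Module k (TP k A n) := inferInstanceAs (Module k (TPobj k A n))

/-- The pure tensor `h₁ ⊗ ⋯ ⊗ hₙ` as an element of `TP k A n`. -/
def tp : ∀ n, (Fin n → A) → TP k A n
  | 0, _ => (1 : k)
  | n + 1, f => f 0 ⊗ₜ[k] tp n (fun i => f i.succ)

/-- Transport along an equality of lengths. -/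
def castTP {m n : ℕ} (h : m = n) : TP k A m ≃ₗ[k] TP k A n :=
  h ▸ LinearEquiv.refl k (TP k A m)

/-- Multiply the `i`-th and `(i+1)`-st tensor factors (`0`-indexed). -/
def mulAt : ∀ (n : ℕ), Fin (n + 1) → (TP k A (n + 2) →ₗ[k] TP k A (n + 1))
  | n, ⟨0, _⟩ =>
      (LinearMap.rTensor (TP k A n) (LinearMap.mul' k A)
        ∘ₗ (TensorProduct.assoc k A A (TP k A n)).symm.toLinearMap :
          A ⊗[k] (A ⊗[k] TP k A n) →ₗ[k] A ⊗[k] TP k A n)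
  | n + 1, ⟨j + 1, h⟩ => LinearMap.lTensor A (mulAt n ⟨j, by omega⟩)
  | 0, ⟨j + 1, h⟩ => absurd h (by omega)

/-- Apply the counit `counitA` to the `i`-th tensor factor (`0`-indexed). -/
def dropAt (counitA : A →ₗ[k] k) : ∀ (n : ℕ), Fin (n + 1) → (TP k A (n + 1) →ₗ[k] TP k A n)
  | n, ⟨0, _⟩ =>
      (TensorProduct.lid k (TP k A n)).toLinearMap ∘ₗ LinearMap.rTensor (TP k A n) counitA
  | n + 1, ⟨j + 1, h⟩ => LinearMap.lTensor A (dropAt counitA n ⟨j, by omega⟩)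
  | 0, ⟨j + 1, h⟩ => absurd h (by omega)

/-- Apply the comultiplication `comulA` to the `i`-th tensor factor (`0`-indexed). -/
def comulAt (comulA : A →ₗ[k] A ⊗[k] A) : ∀ (n : ℕ), Fin n → (TP k A n →ₗ[k] TP k A (n + 1))
  | n + 1, ⟨0, _⟩ =>
      (TensorProduct.assoc k A A (TP k A n)).toLinearMap ∘ₗ LinearMap.rTensor (TP k A n) comulA
  | n + 2, ⟨j + 1, h⟩ => LinearMap.lTensor A (comulAt comulA (n + 1) ⟨j, by omega⟩)
  | 1, ⟨j + 1, h⟩ => absurd h (by omega)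
  | 0, i => absurd i.2 (by omega)

/-- Prepend a `1` in front: `x ↦ 1 ⊗ x`. -/
def cons1 (n : ℕ) : TP k A n →ₗ[k] TP k A (n + 1) := TensorProduct.mk k A (TP k A n) 1

/-- Append a tensor factor at the end. -/
def snoc : ∀ (n : ℕ), TP k A n ⊗[k] A →ₗ[k] TP k A (n + 1)
  | 0 => (TensorProduct.comm k k A).toLinearMap
  | n + 1 =>
      LinearMap.lTensor A (snoc n) ∘ₗ (TensorProduct.assoc k A (TP k A n) A).toLinearMap

/-- Append a `1` at the end: `x ↦ x ⊗ 1`. -/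
def snoc1 (n : ℕ) : TP k A n →ₗ[k] TP k A (n + 1) :=
  snoc k A n ∘ₗ (TensorProduct.mk k (TP k A n) A).flip 1

/-- Insert a `1` right after the `i`-th tensor factor. -/
def insertOneAt : ∀ (n : ℕ), Fin (n + 1) → (TP k A (n + 1) →ₗ[k] TP k A (n + 2))
  | n, ⟨0, _⟩ => LinearMap.lTensor A (cons1 k A n)
  | n + 1, ⟨j + 1, h⟩ => LinearMap.lTensor A (insertOneAt n ⟨j, by omega⟩)
  | 0, ⟨j + 1, h⟩ => absurd h (by omega)

/-- Pull the last tensor factor to the front. -/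
def lastSplit : ∀ (n : ℕ), TP k A (n + 1) →ₗ[k] A ⊗[k] TP k A n
  | 0 => LinearMap.id
  | n + 1 =>
      (TensorProduct.leftComm k A A (TP k A n)).toLinearMap
        ∘ₗ LinearMap.lTensor A (lastSplit n)

/-- Apply the counit to every factor. -/
def epsAll (counitA : A →ₗ[k] k) : ∀ (n : ℕ), TP k A n →ₗ[k] k
  | 0 => LinearMap.id
  | n + 1 =>
      (TensorProduct.lid k k).toLinearMap
        ∘ₗ TensorProduct.map counitA (epsAll counitA n)

/-- The diagonal (left) action of `A` on `TP k A (n+1)` with respect to the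
comultiplication `comulA`: `h · (h₀ ⊗ ⋯ ⊗ hₙ) = h⁽¹⁾h₀ ⊗ ⋯ ⊗ h⁽ⁿ⁺¹⁾hₙ`. -/
def diagTP (comulA : A →ₗ[k] A ⊗[k] A) : ∀ (n : ℕ), A ⊗[k] TP k A (n + 1) →ₗ[k] TP k A (n + 1)
  | 0 =>
      (LinearMap.rTensor k (LinearMap.mul' k A)
        ∘ₗ (TensorProduct.assoc k A A k).symm.toLinearMap :
          A ⊗[k] (A ⊗[k] k) →ₗ[k] A ⊗[k] k)
  | n + 1 =>
      TensorProduct.map (LinearMap.mul' k A) (diagTP comulA n)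
        ∘ₗ (TensorProduct.tensorTensorTensorComm k A A A (TP k A (n + 1))).toLinearMap
        ∘ₗ LinearMap.rTensor (A ⊗[k] TP k A (n + 1)) comulA

/-- The diagonal right coaction of `A` on `TP k A n`:
`h₀ ⊗ ⋯ ⊗ hₙ ↦ (h₀⁽¹⁾ ⊗ ⋯ ⊗ hₙ⁽¹⁾) ⊗ (h₀⁽²⁾ ⋯ hₙ⁽²⁾)`. -/
def codiagTP (comulA : A →ₗ[k] A ⊗[k] A) : ∀ (n : ℕ), TP k A n →ₗ[k] TP k A n ⊗[k] A
  | 0 => (TensorProduct.mk k (TP k A 0) A).flip 1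
  | n + 1 =>
      (LinearMap.lTensor (A ⊗[k] TP k A n) (LinearMap.mul' k A)
        ∘ₗ (TensorProduct.tensorTensorTensorComm k A A (TP k A n) A).toLinearMap
        ∘ₗ TensorProduct.map comulA (codiagTP comulA n) :
          TP k A (n + 1) →ₗ[k] (A ⊗[k] TP k A n) ⊗[k] A)

end TP

/-! ### Rearrangement of tensor powers of tensor products, and the diagonal -/

section Diag
variable (A B : Type) [Ring A] [Algebra k A] [Ring B] [Algebra k B]

/-- The rearrangement `(a₀⊗b₀) ⊗ ⋯ ⊗ (aₙ⊗bₙ) ↦ (a₀⊗⋯⊗aₙ) ⊗ (b₀⊗⋯⊗bₙ)`. -/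
def OmegaTP : ∀ (n : ℕ), TP k (A ⊗[k] B) n ≃ₗ[k] TP k A n ⊗[k] TP k B n
  | 0 => (TensorProduct.lid k k).symm
  | n + 1 =>
      (TensorProduct.congr (LinearEquiv.refl k (A ⊗[k] B)) (OmegaTP n)) ≪≫ₗ
        TensorProduct.tensorTensorTensorComm k A B (TP k A n) (TP k B n)

/-- Apply the comultiplication to every tensor factor:
`h₁ ⊗ ⋯ ⊗ hₙ ↦ (h₁⁽¹⁾⊗h₁⁽²⁾) ⊗ ⋯ ⊗ (hₙ⁽¹⁾⊗hₙ⁽²⁾)` in `TP k (A ⊗ A) n`. -/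
def TPdiag (comulA : A →ₗ[k] A ⊗[k] A) : ∀ (n : ℕ), TP k A n →ₗ[k] TP k (A ⊗[k] A) n
  | 0 => LinearMap.id
  | n + 1 => TensorProduct.map comulA (TPdiag comulA n)

end Diag

/-! ### Shuffles -/

section Shuffle
variable (A : Type) [Ring A] [Algebra k A]

/-- The subset of `Fin n` obtained from a subset of `Fin (n+1)` by removing `0`
and shifting down. -/
def tailSet {n : ℕ} (S : Finset (Fin (n + 1))) : Finset (Fin n) :=
  Finset.univ.filter (fun i : Fin n => i.succ ∈ S)

lemma tailSet_card_mem {n : ℕ} (S : Finset (Fin (n + 1))) (h : (0 : Fin (n + 1)) ∈ S) :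
    (tailSet S).card + 1 = S.card := by
  classical
  have h1 : S.card = ∑ x : Fin (n + 1), if x ∈ S then 1 else 0 := by
    rw [← Finset.card_filter]
    congr 1
    simp [Finset.filter_mem_eq_inter]
  rw [h1, Fin.sum_univ_succ, if_pos h]
  have h2 : (tailSet S).card = ∑ i : Fin n, if i.succ ∈ S then 1 else 0 := by
    rw [tailSet, Finset.card_filter]
  omega

lemma tailSet_card_not_mem {n : ℕ} (S : Finset (Fin (n + 1))) (h : (0 : Fin (n + 1)) ∉ S) :
    (tailSet S).card = S.card := by
  classical
  have h1 : S.card = ∑ x : Fin (n + 1), if x ∈ S then 1 else 0 := by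
    rw [← Finset.card_filter]
    congr 1
    simp [Finset.filter_mem_eq_inter]
  rw [h1, Fin.sum_univ_succ, if_neg h]
  have h2 : (tailSet S).card = ∑ i : Fin n, if i.succ ∈ S then 1 else 0 := by
    rw [tailSet, Finset.card_filter]
  omega

lemma tailSet_compl {n : ℕ} (S : Finset (Fin (n + 1))) :
    (tailSet S)ᶜ = tailSet Sᶜ := by
  classical
  ext i
  simp [tailSet]

lemma card_compl_eq {n p q : ℕ} (hpq : p + q = n) (S : Finset (Fin n)) (hS : S.card = p) :
    Sᶜ.card = q := by
  have h1 := Finset.card_compl S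
  have h2 := Finset.card_le_univ S
  simp only [Fintype.card_fin] at h1
  simp only [Finset.card_fin, Fintype.card_fin] at h2
  omega

/-- Split a tensor power according to a subset `S` of the positions: the factors in
positions belonging to `S` are collected (in order) into the first output, those in the
complementary positions into the second output. -/
def splitTP : ∀ (n : ℕ) (S : Finset (Fin n)), TP k A n →ₗ[k] TP k A S.card ⊗[k] TP k A Sᶜ.card
  | 0, S =>
      (TensorProduct.congr
          (castTP k A (show 0 = S.card by
            rw [Finset.eq_empty_of_isEmpty S, Finset.card_empty]))
          (castTP k A (show 0 = Sᶜ.card by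
            rw [Finset.eq_empty_of_isEmpty Sᶜ, Finset.card_empty]))).toLinearMap
        ∘ₗ (TensorProduct.lid k (TP k A 0)).symm.toLinearMap
  | n + 1, S =>
      if h0 : (0 : Fin (n + 1)) ∈ S then
        (TensorProduct.congr
            (castTP k A (by simpa using tailSet_card_mem S h0) :
                TP k A ((tailSet S).card + 1) ≃ₗ[k] TP k A S.card)
            (castTP k A (by
              rw [tailSet_compl]
              exact tailSet_card_not_mem Sᶜ (by simpa using h0)))).toLinearMap
          ∘ₗ (TensorProduct.assoc k A (TP k A (tailSet S).card)
                (TP k A (tailSet S)ᶜ.card)).symm.toLinearMap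
          ∘ₗ LinearMap.lTensor A (splitTP n (tailSet S))
      else
        (TensorProduct.congr
            (castTP k A (tailSet_card_not_mem S h0))
            (castTP k A (by
              rw [tailSet_compl]
              simpa using tailSet_card_mem Sᶜ (by simpa using h0)) :
                TP k A ((tailSet S)ᶜ.card + 1) ≃ₗ[k] TP k A Sᶜ.card)).toLinearMap
          ∘ₗ ((TensorProduct.leftComm k A (TP k A (tailSet S).card)
                (TP k A (tailSet S)ᶜ.card)).toLinearMap
          ∘ₗ LinearMap.lTensor A (splitTP n (tailSet S)) :
            A ⊗[k] TP k A n →ₗ[k]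
              TP k A (tailSet S).card ⊗[k] (A ⊗[k] TP k A (tailSet S)ᶜ.card))

/-- The sign of the `(p,q)`-shuffle associated to a subset `S ⊆ {0,…,n−1}` of
cardinality `p` (the shuffle placing the positions in `S` first, in order): the parity
of the number of pairs `(a, b) ∈ S × Sᶜ` with `b < a`. -/
def shuffleSign {n : ℕ} (S : Finset (Fin n)) : ℤ :=
  (-1) ^ (∑ a ∈ S, (Sᶜ.filter (· < a)).card)

/-- Keep the tensor factors in positions belonging to `S` (in order) and apply the
counit to all the other factors. -/
def keepTP (counitA : A →ₗ[k] k) (n : ℕ) (S : Finset (Fin n)) :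
    TP k A n →ₗ[k] TP k A S.card :=
  (TensorProduct.rid k (TP k A S.card)).toLinearMap
    ∘ₗ LinearMap.lTensor (TP k A S.card) (epsAll k A counitA Sᶜ.card)
    ∘ₗ splitTP k A n S

/-- The component `∪_{p,q} : A^{⊗n} → A^{⊗p} ⊗ A^{⊗q}` of the unshuffle coproduct:
`∪_{p,q}(h₁⊗⋯⊗hₙ) = Σ_σ sign(σ) (h_{σ(1)}⊗⋯⊗h_{σ(p)}) ⊗ (h_{σ(p+1)}⊗⋯⊗h_{σ(n)})`,
where `σ` runs over all `(p,q)`-shuffles. -/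
def cupTP (n p q : ℕ) (hpq : p + q = n) : TP k A n →ₗ[k] TP k A p ⊗[k] TP k A q :=
  ∑ S : {S : Finset (Fin n) // S.card = p},
    shuffleSign S.1 •
      ((TensorProduct.congr (castTP k A S.2)
          (castTP k A (card_compl_eq hpq S.1 S.2))).toLinearMap
        ∘ₗ splitTP k A n S.1)

/-- The shuffle map `sh_{p,q} : A^{⊗n} ⊗ A^{⊗n} → A^{⊗p} ⊗ A^{⊗q}` (for `p + q = n`):
the signed sum over all `(p,q)`-shuffles `σ` of the map applying the counit to the
factors in positions `σ(p+1),…,σ(n)` of the first copy and in positions `σ(1),…,σ(p)`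
of the second copy. -/
def shTP (counitA : A →ₗ[k] k) (n p q : ℕ) (hpq : p + q = n) :
    TP k A n ⊗[k] TP k A n →ₗ[k] TP k A p ⊗[k] TP k A q :=
  ∑ S : {S : Finset (Fin n) // S.card = p},
    shuffleSign S.1 •
      TensorProduct.map
        ((castTP k A S.2).toLinearMap ∘ₗ keepTP k A counitA n S.1)
        ((castTP k A (card_compl_eq hpq S.1 S.2)).toLinearMap ∘ₗ keepTP k A counitA n S.1ᶜ)

end Shuffle

/-! ### The Connes–Moscovici style cocyclic module `C^n(H, M) = M ⊗_H H^{⊗(n+1)}` -/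

section CMcochain
variable (A M : Type) [Ring A] [Algebra k A] [AddCommGroup M] [Module k M]

/-- The coface maps of the cocyclic module `C(H,M)` at the level of
`M ⊗ H^{⊗(n+1)}`: for `i ≤ n` the comultiplication is applied to the `i`-th factor,
and for `i = n+1` we take the flip-over coface
`m ⊗ h₀ ⊗ ⋯ ⊗ hₙ ↦ m⁽⁰⁾ ⊗ h₀⁽²⁾ ⊗ h₁ ⊗ ⋯ ⊗ hₙ ⊗ m⁽⁻¹⁾h₀⁽¹⁾`. -/
def cofaceCM (comulA : A →ₗ[k] A ⊗[k] A) (coact : M →ₗ[k] A ⊗[k] M) (n : ℕ)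
    (i : Fin (n + 2)) : M ⊗[k] TP k A (n + 1) →ₗ[k] M ⊗[k] TP k A (n + 2) :=
  if h : i.val ≤ n then
    LinearMap.lTensor M (comulAt k A comulA (n + 1) ⟨i.val, by omega⟩)
  else
    LinearMap.lTensor M
        (snoc k A (n + 1) ∘ₗ (TensorProduct.comm k A (TP k A (n + 1))).toLinearMap)
      ∘ₗ (TensorProduct.leftComm k A M (TP k A (n + 1))).toLinearMap
      ∘ₗ LinearMap.rTensor (M ⊗[k] TP k A (n + 1)) (LinearMap.mul' k A)
      ∘ₗ (TensorProduct.tensorTensorTensorComm k A M A (TP k A (n + 1))).toLinearMap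
      ∘ₗ (LinearMap.rTensor (TP k A (n + 2)) coact :
          M ⊗[k] TP k A (n + 2) →ₗ[k] (A ⊗[k] M) ⊗[k] (A ⊗[k] TP k A (n + 1)))
      ∘ₗ LinearMap.lTensor M (comulAt k A comulA (n + 1) ⟨0, by omega⟩)

/-- The codegeneracy maps of the cocyclic module `C(H,M)` at the level of
`M ⊗ H^{⊗(n+2)}`: `σᵢ` applies the counit to the `(i+1)`-st factor. -/
def codegenCM (counitA : A →ₗ[k] k) (n : ℕ) (i : Fin (n + 1)) :
    M ⊗[k] TP k A (n + 2) →ₗ[k] M ⊗[k] TP k A (n + 1) :=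
  LinearMap.lTensor M (dropAt k A counitA (n + 1) ⟨i.val + 1, by omega⟩)

/-- The cocyclic operator of `C(H,M)` at the level of `M ⊗ H^{⊗(n+1)}`:
`τₙ(m ⊗ h₀ ⊗ ⋯ ⊗ hₙ) = m⁽⁰⁾ ⊗ h₁ ⊗ ⋯ ⊗ hₙ ⊗ m⁽⁻¹⁾h₀`. -/
def tauCM (coact : M →ₗ[k] A ⊗[k] M) (n : ℕ) :
    M ⊗[k] TP k A (n + 1) →ₗ[k] M ⊗[k] TP k A (n + 1) :=
  LinearMap.lTensor M (snoc k A n ∘ₗ (TensorProduct.comm k A (TP k A n)).toLinearMap)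
    ∘ₗ (TensorProduct.leftComm k A M (TP k A n)).toLinearMap
    ∘ₗ LinearMap.rTensor (M ⊗[k] TP k A n) (LinearMap.mul' k A)
    ∘ₗ (TensorProduct.tensorTensorTensorComm k A M A (TP k A n)).toLinearMap
    ∘ₗ LinearMap.rTensor (TP k A (n + 1)) coact

/-- The relators defining `C^n(H, M) = M ⊗_H H^{⊗(n+1)}` as a quotient of
`M ⊗ H^{⊗(n+1)}`: the span of all `m·h ⊗ t − m ⊗ h·t`, where `h` acts diagonally
(through the comultiplication) on `t ∈ H^{⊗(n+1)}`. -/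
def cmRel (comulA : A →ₗ[k] A ⊗[k] A) (act : M →ₗ[k] A →ₗ[k] M) (n : ℕ) :
    Submodule k (M ⊗[k] TP k A (n + 1)) :=
  Submodule.span k {x | ∃ (m : M) (h : A) (t : TP k A (n + 1)),
    x = act m h ⊗ₜ[k] t - m ⊗ₜ[k] diagTP k A comulA n (h ⊗ₜ[k] t)}

/-- The Hopf-cyclic cochain space `C^n(H, M) = M ⊗_H H^{⊗(n+1)}`. -/
def CM (comulA : A →ₗ[k] A ⊗[k] A) (act : M →ₗ[k] A →ₗ[k] M) (n : ℕ) : Type :=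
  (M ⊗[k] TP k A (n + 1)) ⧸ cmRel k A M comulA act n

instance (comulA : A →ₗ[k] A ⊗[k] A) (act : M →ₗ[k] A →ₗ[k] M) (n : ℕ) :
    AddCommGroup (CM k A M comulA act n) :=
  inferInstanceAs (AddCommGroup ((M ⊗[k] TP k A (n + 1)) ⧸ cmRel k A M comulA act n))

instance (comulA : A →ₗ[k] A ⊗[k] A) (act : M →ₗ[k] A →ₗ[k] M) (n : ℕ) :
    Module k (CM k A M comulA act n) :=
  inferInstanceAs (Module k ((M ⊗[k] TP k A (n + 1)) ⧸ cmRel k A M comulA act n))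

/-- The canonical projection `M ⊗ H^{⊗(n+1)} → C^n(H,M)`. -/
def cmMk (comulA : A →ₗ[k] A ⊗[k] A) (act : M →ₗ[k] A →ₗ[k] M) (n : ℕ) :
    M ⊗[k] TP k A (n + 1) →ₗ[k] CM k A M comulA act n :=
  (cmRel k A M comulA act n).mkQ

end CMcochain

/-! ### The cyclic module `C̃ₙ(H,M)` (Hopf-cyclic homology) -/

section CyChain
variable (A M : Type) [Ring A] [Algebra k A] [AddCommGroup M] [Module k M]

/-- The cyclic operator `τₙ(h₀ ⊗ ⋯ ⊗ hₙ ⊗ m) = hₙ⁽¹⁾ ⊗ h₀ ⊗ ⋯ ⊗ h_{n-1} ⊗ hₙ⁽²⁾·m`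
at the level of `H^{⊗(n+1)} ⊗ M`. -/
def tauCy (comulA : A →ₗ[k] A ⊗[k] A) (act : A →ₗ[k] M →ₗ[k] M) (n : ℕ) :
    TP k A (n + 1) ⊗[k] M →ₗ[k] TP k A (n + 1) ⊗[k] M :=
  TensorProduct.map LinearMap.id (TensorProduct.lift act)
    ∘ₗ (TensorProduct.tensorTensorTensorComm k A A (TP k A n) M).toLinearMap
    ∘ₗ (TensorProduct.assoc k (A ⊗[k] A) (TP k A n) M).toLinearMap
    ∘ₗ LinearMap.rTensor M (LinearMap.rTensor (TP k A n) comulA)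
    ∘ₗ LinearMap.rTensor M (lastSplit k A n)

/-- The face maps of `C̃(H,M)` at the level of `H^{⊗(n+2)} ⊗ M`: for `i ≤ n`,
`δᵢ` multiplies the `i`-th and `(i+1)`-st factors; the last face is
`δ_{n+1}(h₀ ⊗ ⋯ ⊗ h_{n+1} ⊗ m) = h_{n+1}⁽¹⁾h₀ ⊗ h₁ ⊗ ⋯ ⊗ hₙ ⊗ h_{n+1}⁽²⁾·m`. -/
def faceCy (comulA : A →ₗ[k] A ⊗[k] A) (act : A →ₗ[k] M →ₗ[k] M) (n : ℕ)
    (i : Fin (n + 2)) : TP k A (n + 2) ⊗[k] M →ₗ[k] TP k A (n + 1) ⊗[k] M :=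
  if h : i.val ≤ n then
    LinearMap.rTensor M (mulAt k A n ⟨i.val, by omega⟩)
  else
    LinearMap.rTensor M (mulAt k A n ⟨0, by omega⟩)
      ∘ₗ tauCy k A M comulA act (n + 1)

/-- The degeneracy maps of `C̃(H,M)` at the level of `H^{⊗(n+1)} ⊗ M`: `σᵢ` inserts a
`1` after the `i`-th tensor factor. -/
def degenCy (n : ℕ) (i : Fin (n + 1)) :
    TP k A (n + 1) ⊗[k] M →ₗ[k] TP k A (n + 2) ⊗[k] M :=
  LinearMap.rTensor M (insertOneAt k A n i)

/-- The map whose kernel is the cotensor product `H^{⊗(n+1)} □_H M`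
(diagonal right coaction on `H^{⊗(n+1)}`, left coaction `coact` on `M`). -/
def cotensorMapCy (comulA : A →ₗ[k] A ⊗[k] A) (coact : M →ₗ[k] A ⊗[k] M) (n : ℕ) :
    TP k A (n + 1) ⊗[k] M →ₗ[k] TP k A (n + 1) ⊗[k] (A ⊗[k] M) :=
  (TensorProduct.assoc k (TP k A (n + 1)) A M).toLinearMap
      ∘ₗ LinearMap.rTensor M (codiagTP k A comulA (n + 1))
    - LinearMap.lTensor (TP k A (n + 1)) coact

/-- The cotensor product `C̃ₙ(H,M) = H^{⊗(n+1)} □_H M`, as a submodule of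
`H^{⊗(n+1)} ⊗ M`. -/
def cotensorCy (comulA : A →ₗ[k] A ⊗[k] A) (coact : M →ₗ[k] A ⊗[k] M) (n : ℕ) :
    Submodule k (TP k A (n + 1) ⊗[k] M) :=
  LinearMap.ker (cotensorMapCy k A M comulA coact n)

end CyChain

/-! ### (Stable) anti-Yetter–Drinfeld conditions -/

section AYD

variable (A M : Type) [Ring A] [Algebra k A] [AddCommGroup M] [Module k M]

/-- `M` is a right `A`-module via the bilinear map `act`. -/
def IsRightAction (act : M →ₗ[k] A →ₗ[k] M) : Prop :=
  (∀ m : M, act m 1 = m) ∧ ∀ (m : M) (a b : A), act (act m a) b = act m (a * b)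

/-- `M` is a left `A`-module via the bilinear map `act`. -/
def IsLeftAction (act : A →ₗ[k] M →ₗ[k] M) : Prop :=
  (∀ m : M, act 1 m = m) ∧ ∀ (a b : A) (m : M), act a (act b m) = act (a * b) m

/-- `coact` makes `M` a left `A`-comodule, with respect to the comultiplication `comulA`
and counit `counitA`. -/
def IsLeftCoaction (comulA : A →ₗ[k] A ⊗[k] A) (counitA : A →ₗ[k] k)
    (coact : M →ₗ[k] A ⊗[k] M) : Prop :=
  (LinearMap.rTensor M comulA ∘ₗ coact
      = (TensorProduct.assoc k A A M).symm.toLinearMap ∘ₗ LinearMap.lTensor A coact ∘ₗ coact)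
  ∧ ∀ m : M, (TensorProduct.lid k M) (LinearMap.rTensor M counitA (coact m)) = m

/-- The iterated comultiplication `h ↦ h⁽¹⁾ ⊗ (h⁽²⁾ ⊗ h⁽³⁾)`. -/
def comul₂ (comulA : A →ₗ[k] A ⊗[k] A) : A →ₗ[k] A ⊗[k] (A ⊗[k] A) :=
  LinearMap.lTensor A comulA ∘ₗ comulA

/-- The linear map `(a ⊗ m) ⊗ (h₁ ⊗ (h₂ ⊗ h₃)) ↦ (S(h₃) * a * h₁) ⊗ (m · h₂)`,
the right-hand side of the (right-module, left-comodule) anti-Yetter–Drinfeld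
condition. -/
def aydRHS (antipodeA : A →ₗ[k] A) (act : M →ₗ[k] A →ₗ[k] M) :
    (A ⊗[k] M) ⊗[k] (A ⊗[k] (A ⊗[k] A)) →ₗ[k] A ⊗[k] M :=
  TensorProduct.map (LinearMap.mul' k A ∘ₗ LinearMap.lTensor A (LinearMap.mul' k A))
      (TensorProduct.lift act)
    ∘ₗ (TensorProduct.assoc k A (A ⊗[k] A) (M ⊗[k] A)).symm.toLinearMap
    ∘ₗ (TensorProduct.leftComm k (A ⊗[k] A) A (M ⊗[k] A)).toLinearMap
    ∘ₗ LinearMap.lTensor (A ⊗[k] A)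
        ((TensorProduct.leftComm k M A A).toLinearMap
          ∘ₗ LinearMap.lTensor M (TensorProduct.comm k A A).toLinearMap)
    ∘ₗ (TensorProduct.tensorTensorTensorComm k A M A (A ⊗[k] A)).toLinearMap
    ∘ₗ LinearMap.lTensor (A ⊗[k] M) (LinearMap.lTensor A (LinearMap.lTensor A antipodeA))

/-- The anti-Yetter–Drinfeld compatibility condition
`φ(m·h) = S(h⁽³⁾) m⁽⁻¹⁾ h⁽¹⁾ ⊗ m⁽⁰⁾·h⁽²⁾`, written without Sweedler notation. -/
def IsAYD (comulA : A →ₗ[k] A ⊗[k] A) (antipodeA : A →ₗ[k] A)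
    (act : M →ₗ[k] A →ₗ[k] M) (coact : M →ₗ[k] A ⊗[k] M) : Prop :=
  ∀ (m : M) (h : A),
    coact (act m h) = aydRHS k A M antipodeA act (coact m ⊗ₜ[k] comul₂ k A comulA h)

/-- The stability condition `m⁽⁰⁾ · m⁽⁻¹⁾ = m` for a right module, left comodule. -/
def IsStable (act : M →ₗ[k] A →ₗ[k] M) (coact : M →ₗ[k] A ⊗[k] M) : Prop :=
  ∀ m : M, TensorProduct.lift act (TensorProduct.comm k A M (coact m)) = m

/-- The linear map `(h₁ ⊗ (h₂ ⊗ h₃)) ⊗ (a ⊗ m) ↦ (h₁ * a * S(h₃)) ⊗ (h₂ · m)`,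
the right-hand side of the left-left anti-Yetter–Drinfeld condition. -/
def llAydRHS (antipodeA : A →ₗ[k] A) (act : A →ₗ[k] M →ₗ[k] M) :
    (A ⊗[k] (A ⊗[k] A)) ⊗[k] (A ⊗[k] M) →ₗ[k] A ⊗[k] M :=
  TensorProduct.map (LinearMap.mul' k A) (TensorProduct.lift act)
    ∘ₗ (TensorProduct.tensorTensorTensorComm k A A A M).toLinearMap
    ∘ₗ LinearMap.rTensor (A ⊗[k] M)
        ((TensorProduct.comm k A A).toLinearMap
          ∘ₗ LinearMap.lTensor A (LinearMap.mul' k A)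
          ∘ₗ (TensorProduct.assoc k A A A).toLinearMap
          ∘ₗ LinearMap.rTensor A (TensorProduct.comm k A A).toLinearMap)
    ∘ₗ (TensorProduct.tensorTensorTensorComm k (A ⊗[k] A) A A M).toLinearMap
    ∘ₗ LinearMap.rTensor (A ⊗[k] M) (TensorProduct.assoc k A A A).symm.toLinearMap
    ∘ₗ LinearMap.rTensor (A ⊗[k] M) (LinearMap.lTensor A (LinearMap.lTensor A antipodeA))

/-- The left-left anti-Yetter–Drinfeld condition
`φ(h·m) = h⁽¹⁾ m⁽⁻¹⁾ S(h⁽³⁾) ⊗ h⁽²⁾·m⁽⁰⁾`. -/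
def IsLLAYD (comulA : A →ₗ[k] A ⊗[k] A) (antipodeA : A →ₗ[k] A)
    (act : A →ₗ[k] M →ₗ[k] M) (coact : M →ₗ[k] A ⊗[k] M) : Prop :=
  ∀ (h : A) (m : M),
    coact (act h m) = llAydRHS k A M antipodeA act (comul₂ k A comulA h ⊗ₜ[k] coact m)

/-- The stability condition `m⁽⁻¹⁾ · m⁽⁰⁾ = m` for a left module, left comodule. -/
def IsLLStable (act : A →ₗ[k] M →ₗ[k] M) (coact : M →ₗ[k] A ⊗[k] M) : Prop :=
  ∀ m : M, TensorProduct.lift act (coact m) = m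

end AYD

/-! ### Tensor products of (co)module structures -/

section TensorStructures

variable (A B M N : Type) [Ring A] [Algebra k A] [Ring B] [Algebra k B]
variable [AddCommGroup M] [Module k M] [AddCommGroup N] [Module k N]

/-- The componentwise right action of `A ⊗ B` on `M ⊗ N`. -/
def tensorAct (actM : M →ₗ[k] A →ₗ[k] M) (actN : N →ₗ[k] B →ₗ[k] N) :
    M ⊗[k] N →ₗ[k] (A ⊗[k] B) →ₗ[k] M ⊗[k] N :=
  TensorProduct.curry
    (TensorProduct.map (TensorProduct.lift actM) (TensorProduct.lift actN)
      ∘ₗ (TensorProduct.tensorTensorTensorComm k M N A B).toLinearMap)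

/-- The componentwise left action of `A ⊗ B` on `M ⊗ N`. -/
def tensorLAct (actM : A →ₗ[k] M →ₗ[k] M) (actN : B →ₗ[k] N →ₗ[k] N) :
    (A ⊗[k] B) →ₗ[k] M ⊗[k] N →ₗ[k] M ⊗[k] N :=
  TensorProduct.curry
    (TensorProduct.map (TensorProduct.lift actM) (TensorProduct.lift actN)
      ∘ₗ (TensorProduct.tensorTensorTensorComm k A B M N).toLinearMap)

/-- The coaction `m ⊗ n ↦ (m⁽⁻¹⁾ ⊗ n⁽⁻¹⁾) ⊗ (m⁽⁰⁾ ⊗ n⁽⁰⁾)` of `A ⊗ B` on `M ⊗ N`. -/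
def tensorCoact (coactM : M →ₗ[k] A ⊗[k] M) (coactN : N →ₗ[k] B ⊗[k] N) :
    M ⊗[k] N →ₗ[k] (A ⊗[k] B) ⊗[k] (M ⊗[k] N) :=
  (TensorProduct.tensorTensorTensorComm k A M B N).toLinearMap
    ∘ₗ TensorProduct.map coactM coactN

/-- The comultiplication `(a ⊗ b) ↦ (a⁽¹⁾ ⊗ b⁽¹⁾) ⊗ (a⁽²⁾ ⊗ b⁽²⁾)` of a tensor product. -/
def tensorComul (comulA : A →ₗ[k] A ⊗[k] A) (comulB : B →ₗ[k] B ⊗[k] B) :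
    (A ⊗[k] B) →ₗ[k] (A ⊗[k] B) ⊗[k] (A ⊗[k] B) :=
  (TensorProduct.tensorTensorTensorComm k A A B B).toLinearMap
    ∘ₗ TensorProduct.map comulA comulB

/-- The antipode `S ⊗ S` of a tensor product. -/
def tensorAntipode (antipodeA : A →ₗ[k] A) (antipodeB : B →ₗ[k] B) :
    (A ⊗[k] B) →ₗ[k] A ⊗[k] B :=
  TensorProduct.map antipodeA antipodeB

/-- The rearrangement
`(m ⊗ n) ⊗ ((a₀⊗b₀) ⊗ ⋯ ⊗ (aₙ⊗bₙ)) ↦ (m ⊗ a₀⊗⋯⊗aₙ) ⊗ (n ⊗ b₀⊗⋯⊗bₙ)`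
identifying the underlying space of `C^n(A ⊗ B, M ⊗ N)` with the tensor product of
those of `C^n(A, M)` and `C^n(B, N)`. -/
def OmegaCM (n : ℕ) :
    (M ⊗[k] N) ⊗[k] TP k (A ⊗[k] B) (n + 1) ≃ₗ[k]
      (M ⊗[k] TP k A (n + 1)) ⊗[k] (N ⊗[k] TP k B (n + 1)) :=
  TensorProduct.congr (LinearEquiv.refl k (M ⊗[k] N)) (OmegaTP k A B (n + 1)) ≪≫ₗ
    TensorProduct.tensorTensorTensorComm k M N (TP k A (n + 1)) (TP k B (n + 1))

/-- The rearrangement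
`((a₀⊗b₀) ⊗ ⋯ ⊗ (aₙ⊗bₙ)) ⊗ (m ⊗ n) ↦ (a₀⊗⋯⊗aₙ ⊗ m) ⊗ (b₀⊗⋯⊗bₙ ⊗ n)`
identifying the underlying space of `C̃ₙ(A ⊗ B, M ⊗ N)` with the tensor product of
those of `C̃ₙ(A, M)` and `C̃ₙ(B, N)`. -/
def OmegaCy (n : ℕ) :
    TP k (A ⊗[k] B) (n + 1) ⊗[k] (M ⊗[k] N) ≃ₗ[k]
      (TP k A (n + 1) ⊗[k] M) ⊗[k] (TP k B (n + 1) ⊗[k] N) :=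
  TensorProduct.congr (OmegaTP k A B (n + 1)) (LinearEquiv.refl k (M ⊗[k] N)) ≪≫ₗ
    TensorProduct.tensorTensorTensorComm k (TP k A (n + 1)) (TP k B (n + 1)) M N

end TensorStructures

end HopfCyclicStmt



open HopfCyclicStmt

variable (k : Type) [Field k] [CharZero k]
variable (H M : Type) [Ring H] [HopfAlgebra k H] [AddCommGroup M] [Module k M]

/-- The chain-level map
`ρₙ(h₀⊗⋯⊗hₙ⊗m) = (h₀⁽¹⁾⊗⋯⊗hₙ⁽¹⁾⊗m₍₁₎) ⊗ (h₀⁽²⁾⊗⋯⊗hₙ⁽²⁾⊗m₍₂₎)` on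
`H^{⊗(n+1)} ⊗ M`, i.e. `Ωₙ ∘ (Δ^{⊗(n+1)} ⊗ ψ)`. -/
def rhoPreCy (ψ : M →ₗ[k] M ⊗[k] M) (n : ℕ) :
    TP k H (n + 1) ⊗[k] M →ₗ[k] (TP k H (n + 1) ⊗[k] M) ⊗[k] (TP k H (n + 1) ⊗[k] M) :=
  (OmegaCy k H H M M n).toLinearMap
    ∘ₗ TensorProduct.map (TPdiag k H (Coalgebra.comul) (n + 1)) ψ


open LinearMap

set_option linter.unusedSectionVars false
set_option maxHeartbeats 1000000
set_option synthInstance.maxHeartbeats 400000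

/-! ### Generic naturality lemmas for `tensorTensorTensorComm` -/
section Generic
variable {k' : Type} [Field k']
variable {A B C D A' B' C' D' : Type}
  [AddCommGroup A] [Module k' A] [AddCommGroup B] [Module k' B]
  [AddCommGroup C] [Module k' C] [AddCommGroup D] [Module k' D]
  [AddCommGroup A'] [Module k' A'] [AddCommGroup B'] [Module k' B']
  [AddCommGroup C'] [Module k' C'] [AddCommGroup D'] [Module k' D']

lemma ttt_map_l (f : A →ₗ[k'] A') (g : B →ₗ[k'] B') (x : A ⊗[k'] B) (y : C ⊗[k'] D) :
    tensorTensorTensorComm k' A' B' C D (TensorProduct.map f g x ⊗ₜ[k'] y)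
      = TensorProduct.map (rTensor C f) (rTensor D g)
          (tensorTensorTensorComm k' A B C D (x ⊗ₜ[k'] y)) := by
  induction x using TensorProduct.induction_on with
  | zero => simp
  | add u v hu hv => simp only [map_add, add_tmul, hu, hv]
  | tmul a b =>
    induction y using TensorProduct.induction_on with
    | zero => simp
    | add u v hu hv => simp only [map_add, tmul_add, hu, hv]
    | tmul c d => simp

lemma ttt_map_r (f : C →ₗ[k'] C') (g : D →ₗ[k'] D') (x : A ⊗[k'] B) (y : C ⊗[k'] D) :
    tensorTensorTensorComm k' A B C' D' (x ⊗ₜ[k'] TensorProduct.map f g y)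
      = TensorProduct.map (lTensor A f) (lTensor B g)
          (tensorTensorTensorComm k' A B C D (x ⊗ₜ[k'] y)) := by
  induction x using TensorProduct.induction_on with
  | zero => simp
  | add u v hu hv => simp only [map_add, add_tmul, hu, hv]
  | tmul a b =>
    induction y using TensorProduct.induction_on with
    | zero => simp
    | add u v hu hv => simp only [map_add, tmul_add, hu, hv]
    | tmul c d => simp

end Generic


/-! ### The per-factor diagonal `Phi` and basic bridges -/

def Phi (n : ℕ) : TP k H n →ₗ[k] TP k H n ⊗[k] TP k H n :=
  (OmegaTP k H H n).toLinearMap ∘ₗ TPdiag k H Coalgebra.comul n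

lemma Phi_succ_tmul (n : ℕ) (h : H) (t : TP k H n) :
    Phi k H (n + 1) (h ⊗ₜ[k] t)
      = tensorTensorTensorComm k H H (TP k H n) (TP k H n)
          ((Coalgebra.comul h) ⊗ₜ[k] (Phi k H n t)) := rfl

lemma rho_apply (ψ : M →ₗ[k] M ⊗[k] M) (n : ℕ) (u : TP k H (n + 1)) (m : M) :
    rhoPreCy k H M ψ n (u ⊗ₜ[k] m)
      = tensorTensorTensorComm k (TP k H (n + 1)) (TP k H (n + 1)) M M
          ((Phi k H (n + 1) u) ⊗ₜ[k] (ψ m)) := rfl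

lemma rho_apply' (ψ : M →ₗ[k] M ⊗[k] M) (n : ℕ) (u : H ⊗[k] TP k H n) (m : M) :
    rhoPreCy k H M ψ n (u ⊗ₜ[k] m)
      = tensorTensorTensorComm k (H ⊗[k] TP k H n) (H ⊗[k] TP k H n) M M
          ((Phi k H (n + 1) u) ⊗ₜ[k] (ψ m)) := rfl

lemma mulAt_zero_tmul (n : ℕ) (h0 : 0 < n + 1) (a b : H) (t : TP k H n) :
    mulAt k H n ⟨0, h0⟩ (a ⊗ₜ[k] (b ⊗ₜ[k] t)) = (a * b) ⊗ₜ[k] t := by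
  cases n with
  | zero => rfl
  | succ n => rfl

lemma mulAt_succ (n : ℕ) (j : ℕ) (hj : j + 1 < n + 2) :
    mulAt k H (n + 1) ⟨j + 1, hj⟩
      = lTensor H (mulAt k H n ⟨j, by omega⟩) := rfl

lemma mulAt_zero_def (n : ℕ) (h0 : 0 < n + 1) :
    mulAt k H n ⟨0, h0⟩
      = rTensor (TP k H n) (LinearMap.mul' k H)
          ∘ₗ (TensorProduct.assoc k H H (TP k H n)).symm.toLinearMap := by
  cases n with
  | zero => rfl
  | succ n => rfl

lemma insertOneAt_zero_def (n : ℕ) (h0 : 0 < n + 1) :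
    insertOneAt k H n ⟨0, h0⟩ = lTensor H (cons1 k H n) := by
  cases n with
  | zero => rfl
  | succ n => rfl

lemma insertOneAt_zero_tmul (n : ℕ) (h0 : 0 < n + 1) (a : H) (t : TP k H n) :
    insertOneAt k H n ⟨0, h0⟩ (a ⊗ₜ[k] t) = a ⊗ₜ[k] ((1 : H) ⊗ₜ[k] t) := by
  cases n with
  | zero => rfl
  | succ n => rfl

lemma insertOneAt_succ (n : ℕ) (j : ℕ) (hj : j + 1 < n + 2) :
    insertOneAt k H (n + 1) ⟨j + 1, hj⟩
      = lTensor H (insertOneAt k H n ⟨j, by omega⟩) := rfl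

lemma Phi_succ_tmul' (n : ℕ) (h : H) (t : TP k H n) :
    Phi k H (n + 1) ((h ⊗ₜ[k] t : H ⊗[k] TP k H n))
      = tensorTensorTensorComm k H H (TP k H n) (TP k H n)
          ((Coalgebra.comul h) ⊗ₜ[k] (Phi k H n t)) := rfl

lemma Phi_succ_tmul2 (n : ℕ) (h : H) (t : H ⊗[k] TP k H n) :
    Phi k H (n + 2) ((h ⊗ₜ[k] t : H ⊗[k] (H ⊗[k] TP k H n)))
      = tensorTensorTensorComm k H H (TP k H (n + 1)) (TP k H (n + 1))
          ((Coalgebra.comul h) ⊗ₜ[k] (Phi k H (n + 1) t)) := rfl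

lemma insertOneAt_zero_tmul' (n : ℕ) (h0 : 0 < n + 1) (a : H) (t : TP k H n) :
    insertOneAt k H n ⟨0, h0⟩ ((a ⊗ₜ[k] t : H ⊗[k] TP k H n))
      = ((a ⊗ₜ[k] ((1 : H) ⊗ₜ[k] t : H ⊗[k] TP k H n)) : H ⊗[k] TP k H (n + 1)) :=
  insertOneAt_zero_tmul k H n h0 a t

/-! ### Compatibility of `Phi` with structure maps -/

lemma compat_lTensor (a b : ℕ) (f : TP k H a →ₗ[k] TP k H b)
    (hf : ∀ x : TP k H a, Phi k H b (f x) = TensorProduct.map f f (Phi k H a x)) :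
    ∀ x : H ⊗[k] TP k H a,
      Phi k H (b + 1) (lTensor H f x)
        = TensorProduct.map (lTensor H f) (lTensor H f) (Phi k H (a + 1) x) := by
  intro x
  induction x using TensorProduct.induction_on with
  | zero => rfl
  | add u v hu hv => erw [map_add, map_add, map_add, map_add, hu, hv] <;> rfl
  | tmul h t =>
    erw [lTensor_tmul, Phi_succ_tmul, Phi_succ_tmul, hf, ttt_map_r] <;> rfl

lemma claim3 (n : ℕ) (h0 : 0 < n + 1) (X Y : H ⊗[k] H)
    (Z : TP k H n ⊗[k] TP k H n) :
    tensorTensorTensorComm k H H (TP k H n) (TP k H n) ((X * Y) ⊗ₜ[k] Z)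
      = TensorProduct.map (mulAt k H n ⟨0, h0⟩) (mulAt k H n ⟨0, h0⟩)
          (tensorTensorTensorComm k H H (TP k H (n + 1)) (TP k H (n + 1))
            (X ⊗ₜ[k]
              tensorTensorTensorComm k H H (TP k H n) (TP k H n) (Y ⊗ₜ[k] Z))) := by
  induction X using TensorProduct.induction_on with
  | zero => simp; erw [zero_tmul, map_zero] <;> rfl
  | add u v hu hv => simp only [add_mul, add_tmul, map_add, hu, hv]; erw [add_tmul, map_add, map_add] <;> rfl
  | tmul a b =>
    induction Y using TensorProduct.induction_on with
    | zero => simp; erw [tmul_zero, map_zero] <;> rfl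
    | add u v hu hv => simp only [mul_add, add_tmul, tmul_add, map_add, hu, hv]; erw [tmul_add, map_add, map_add] <;> rfl
    | tmul a' b' =>
      induction Z using TensorProduct.induction_on with
      | zero => simp; erw [tmul_zero, map_zero] <;> rfl
      | add u v hu hv => simp only [tmul_add, map_add, hu, hv]; erw [tmul_add, map_add, map_add] <;> rfl
      | tmul t1 t2 =>
        rw [mulAt_zero_def k H n h0, Algebra.TensorProduct.tmul_mul_tmul]
        rfl

lemma compat_mulAt_zero (n : ℕ) (h0 : 0 < n + 1) :
    ∀ x : H ⊗[k] (H ⊗[k] TP k H n),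
      Phi k H (n + 1) (mulAt k H n ⟨0, h0⟩ x)
        = TensorProduct.map (mulAt k H n ⟨0, h0⟩) (mulAt k H n ⟨0, h0⟩)
            (Phi k H (n + 2) x) := by
  intro x
  induction x using TensorProduct.induction_on with
  | zero => simp; erw [map_zero, map_zero] <;> rfl
  | add u v hu hv => erw [map_add, map_add, map_add, map_add, hu, hv] <;> rfl
  | tmul a y =>
    induction y using TensorProduct.induction_on with
    | zero => simp; erw [map_zero, map_zero] <;> rfl
    | add u v hu hv => simp only [tmul_add, map_add, hu, hv]; erw [map_add, map_add, map_add, map_add, hu, hv] <;> rfl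
    | tmul b t =>
      erw [mulAt_zero_tmul, Phi_succ_tmul, Phi_succ_tmul, Phi_succ_tmul,
        Bialgebra.comul_mul, claim3] <;> rfl

lemma claimIns (n : ℕ) (h0 : 0 < n + 1) (X : H ⊗[k] H)
    (Z : TP k H n ⊗[k] TP k H n) :
    tensorTensorTensorComm k H H (TP k H (n + 1)) (TP k H (n + 1))
        (X ⊗ₜ[k]
          tensorTensorTensorComm k H H (TP k H n) (TP k H n)
            (((1 : H) ⊗ₜ[k] (1 : H)) ⊗ₜ[k] Z))
      = TensorProduct.map (insertOneAt k H n ⟨0, h0⟩) (insertOneAt k H n ⟨0, h0⟩)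
          (tensorTensorTensorComm k H H (TP k H n) (TP k H n) (X ⊗ₜ[k] Z)) := by
  induction X using TensorProduct.induction_on with
  | zero => simp; erw [zero_tmul, map_zero] <;> rfl
  | add u v hu hv => simp only [add_tmul, map_add, hu, hv]; erw [add_tmul, map_add, map_add, hu, hv] <;> rfl
  | tmul a b =>
    induction Z using TensorProduct.induction_on with
    | zero => simp; erw [tmul_zero, map_zero] <;> rfl
    | add u v hu hv => simp only [tmul_add, map_add, hu, hv]; erw [tmul_add, map_add, map_add, hu, hv] <;> rfl
    | tmul t1 t2 =>
      rw [insertOneAt_zero_def k H n h0]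
      rfl

lemma compat_insertOneAt_zero (n : ℕ) (h0 : 0 < n + 1) :
    ∀ x : H ⊗[k] TP k H n,
      Phi k H (n + 2) (insertOneAt k H n ⟨0, h0⟩ x)
        = TensorProduct.map (insertOneAt k H n ⟨0, h0⟩) (insertOneAt k H n ⟨0, h0⟩)
            (Phi k H (n + 1) x) := by
  intro x
  induction x using TensorProduct.induction_on with
  | zero => simp; erw [map_zero, map_zero] <;> rfl
  | add u v hu hv => erw [map_add, map_add, map_add, map_add, hu, hv] <;> rfl
  | tmul a t =>
    rw [insertOneAt_zero_tmul']
    erw [Phi_succ_tmul2 k H n a ((1 : H) ⊗ₜ[k] t)]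
    rw [Phi_succ_tmul', Phi_succ_tmul',
      Bialgebra.comul_one (R := k) (A := H), Algebra.TensorProduct.one_def, claimIns]

lemma compat_mulAt : ∀ (n : ℕ) (i : Fin (n + 1)) (x : TP k H (n + 2)),
    Phi k H (n + 1) (mulAt k H n i x)
      = TensorProduct.map (mulAt k H n i) (mulAt k H n i) (Phi k H (n + 2) x)
  | n, ⟨0, h0⟩, x => by exact compat_mulAt_zero k H n h0 x
  | n + 1, ⟨j + 1, hj⟩, x => by
      rw [mulAt_succ k H n j hj]
      exact compat_lTensor k H (n + 2) (n + 1) (mulAt k H n ⟨j, by omega⟩)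
        (fun y => compat_mulAt n ⟨j, by omega⟩ y) x
  | 0, ⟨j + 1, hj⟩, x => absurd hj (by omega)

lemma compat_insertOneAt : ∀ (n : ℕ) (i : Fin (n + 1)) (x : TP k H (n + 1)),
    Phi k H (n + 2) (insertOneAt k H n i x)
      = TensorProduct.map (insertOneAt k H n i) (insertOneAt k H n i) (Phi k H (n + 1) x)
  | n, ⟨0, h0⟩, x => by exact compat_insertOneAt_zero k H n h0 x
  | n + 1, ⟨j + 1, hj⟩, x => by
      rw [insertOneAt_succ k H n j hj]
      exact compat_lTensor k H (n + 1) (n + 2) (insertOneAt k H n ⟨j, by omega⟩)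
        (fun y => compat_insertOneAt n ⟨j, by omega⟩ y) x
  | 0, ⟨j + 1, hj⟩, x => absurd hj (by omega)

lemma rho_compat (ψ : M →ₗ[k] M ⊗[k] M) (a b : ℕ)
    (f : TP k H (a + 1) →ₗ[k] TP k H (b + 1))
    (hf : ∀ x, Phi k H (b + 1) (f x) = TensorProduct.map f f (Phi k H (a + 1) x)) :
    rhoPreCy k H M ψ b ∘ₗ rTensor M f
      = TensorProduct.map (rTensor M f) (rTensor M f) ∘ₗ rhoPreCy k H M ψ a := by
  apply TensorProduct.ext'
  intro u m
  simp only [comp_apply, rTensor_tmul]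
  rw [rho_apply, rho_apply, hf, ttt_map_l]

/-! ### Degeneracies and inner faces commute with `ρ` -/

lemma degen_comm (ψ : M →ₗ[k] M ⊗[k] M) (n : ℕ) (i : Fin (n + 1)) :
    rhoPreCy k H M ψ (n + 1) ∘ₗ degenCy k H M n i
      = TensorProduct.map (degenCy k H M n i) (degenCy k H M n i)
          ∘ₗ rhoPreCy k H M ψ n := by
  exact rho_compat k H M ψ n (n + 1) (insertOneAt k H n i) (compat_insertOneAt k H n i)

lemma faceCy_le (act : H →ₗ[k] M →ₗ[k] M) (n : ℕ) (i : Fin (n + 2)) (hi : i.val ≤ n)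
    (hlt : i.val < n + 1) :
    faceCy k H M Coalgebra.comul act n i = rTensor M (mulAt k H n ⟨i.val, hlt⟩) := by
  rw [faceCy, dif_pos hi]

lemma face_comm_le (ψ : M →ₗ[k] M ⊗[k] M) (act : H →ₗ[k] M →ₗ[k] M)
    (n : ℕ) (i : Fin (n + 2)) (hi : i.val ≤ n) :
    rhoPreCy k H M ψ n ∘ₗ faceCy k H M Coalgebra.comul act n i
      = TensorProduct.map (faceCy k H M Coalgebra.comul act n i)
          (faceCy k H M Coalgebra.comul act n i) ∘ₗ rhoPreCy k H M ψ (n + 1) := by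
  rw [faceCy_le k H M act n i hi (by omega)]
  exact rho_compat k H M ψ (n + 1) n (mulAt k H n ⟨i.val, by omega⟩)
    (compat_mulAt k H n ⟨i.val, by omega⟩)

/-! ### The key cocommutativity lemma -/

def Jmap : H ⊗[k] ((H ⊗[k] H) ⊗[k] H) →ₗ[k] (H ⊗[k] H) ⊗[k] (H ⊗[k] H) :=
  (TensorProduct.assoc k (H ⊗[k] H) H H).toLinearMap
    ∘ₗ rTensor H (TensorProduct.assoc k H H H).symm.toLinearMap
    ∘ₗ (TensorProduct.assoc k H (H ⊗[k] H) H).symm.toLinearMap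

lemma Jmap_tmul (x p q w : H) :
    Jmap k H (x ⊗ₜ[k] ((p ⊗ₜ[k] q) ⊗ₜ[k] w)) = (x ⊗ₜ[k] p) ⊗ₜ[k] (q ⊗ₜ[k] w) := rfl

section Ksec
variable (hcocomm : ∀ h : H, TensorProduct.comm k H H (Coalgebra.comul h) = Coalgebra.comul h)

-- step `e3`, elementwise
lemma e3_elem (y : H ⊗[k] (H ⊗[k] H)) :
    lTensor (H ⊗[k] H) (Coalgebra.comul : H →ₗ[k] H ⊗[k] H)
        ((TensorProduct.assoc k H H H).symm y)
      = (TensorProduct.assoc k H H (H ⊗[k] H)).symm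
          (lTensor H (lTensor H (Coalgebra.comul : H →ₗ[k] H ⊗[k] H)) y) := by
  induction y using TensorProduct.induction_on with
  | zero => simp
  | add u v hu hv => simp only [map_add, hu, hv]
  | tmul x z =>
    induction z using TensorProduct.induction_on with
    | zero => simp
    | add u v hu hv => simp only [map_add, tmul_add, hu, hv]
    | tmul y w => rfl

lemma h1_elem (a : H) :
    TensorProduct.map (Coalgebra.comul) (Coalgebra.comul) (Coalgebra.comul (R := k) a)
      = (TensorProduct.assoc k H H (H ⊗[k] H)).symm
          (lTensor H (lTensor H (Coalgebra.comul : H →ₗ[k] H ⊗[k] H))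
            (lTensor H (Coalgebra.comul : H →ₗ[k] H ⊗[k] H) (Coalgebra.comul a))) := by
  rw [← LinearMap.lTensor_comp_rTensor]
  rw [comp_apply, ← Coalgebra.coassoc_symm_apply, e3_elem]

lemma Jstep_elem (x1 : H) (Z : H ⊗[k] (H ⊗[k] H)) :
    Jmap k H (x1 ⊗ₜ[k] (TensorProduct.assoc k H H H).symm Z)
      = (TensorProduct.assoc k H H (H ⊗[k] H)).symm (x1 ⊗ₜ[k] Z) := by
  induction Z using TensorProduct.induction_on with
  | zero => simp
  | add u v hu hv => simp only [map_add, tmul_add, hu, hv]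
  | tmul y z =>
    induction z using TensorProduct.induction_on with
    | zero => simp
    | add u v hu hv => simp only [map_add, tmul_add, hu, hv]
    | tmul p q => rfl

lemma h2_elem (a : H) :
    Jmap k H (lTensor H (rTensor H (Coalgebra.comul : H →ₗ[k] H ⊗[k] H))
        (lTensor H (Coalgebra.comul : H →ₗ[k] H ⊗[k] H) (Coalgebra.comul a)))
      = (TensorProduct.assoc k H H (H ⊗[k] H)).symm
          (lTensor H (lTensor H (Coalgebra.comul : H →ₗ[k] H ⊗[k] H))
            (lTensor H (Coalgebra.comul : H →ₗ[k] H ⊗[k] H) (Coalgebra.comul a))) := by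
  have key : ∀ y : H ⊗[k] H,
      Jmap k H (lTensor H (rTensor H (Coalgebra.comul : H →ₗ[k] H ⊗[k] H))
          (lTensor H (Coalgebra.comul : H →ₗ[k] H ⊗[k] H) y))
        = (TensorProduct.assoc k H H (H ⊗[k] H)).symm
            (lTensor H (lTensor H (Coalgebra.comul : H →ₗ[k] H ⊗[k] H))
              (lTensor H (Coalgebra.comul : H →ₗ[k] H ⊗[k] H) y)) := by
    intro y
    induction y using TensorProduct.induction_on with
    | zero => simp
    | add u v hu hv => simp only [map_add, hu, hv]
    | tmul x1 x2 =>
      simp only [lTensor_tmul]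
      rw [← Coalgebra.coassoc_symm_apply, Jstep_elem]
  exact key _

include hcocomm in
lemma h3_elem (a : H) :
    lTensor H (rTensor H (TensorProduct.comm k H H).toLinearMap)
        (lTensor H (rTensor H (Coalgebra.comul : H →ₗ[k] H ⊗[k] H))
          (lTensor H (Coalgebra.comul : H →ₗ[k] H ⊗[k] H) (Coalgebra.comul a)))
      = lTensor H (rTensor H (Coalgebra.comul : H →ₗ[k] H ⊗[k] H))
          (lTensor H (Coalgebra.comul : H →ₗ[k] H ⊗[k] H) (Coalgebra.comul a)) := by
  have key : ∀ y : H ⊗[k] H,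
      lTensor H (rTensor H (TensorProduct.comm k H H).toLinearMap)
          (lTensor H (rTensor H (Coalgebra.comul : H →ₗ[k] H ⊗[k] H))
            (lTensor H (Coalgebra.comul : H →ₗ[k] H ⊗[k] H) y))
        = lTensor H (rTensor H (Coalgebra.comul : H →ₗ[k] H ⊗[k] H))
            (lTensor H (Coalgebra.comul : H →ₗ[k] H ⊗[k] H) y) := by
    intro y
    induction y using TensorProduct.induction_on with
    | zero => simp
    | add u v hu hv => simp only [map_add, hu, hv]
    | tmul x1 x2 =>
      have inner : ∀ w : H ⊗[k] H,
          rTensor H (TensorProduct.comm k H H).toLinearMap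
              (rTensor H (Coalgebra.comul : H →ₗ[k] H ⊗[k] H) w)
            = rTensor H (Coalgebra.comul : H →ₗ[k] H ⊗[k] H) w := by
        intro w
        induction w using TensorProduct.induction_on with
        | zero => simp
        | add u v hu hv => simp only [map_add, hu, hv]
        | tmul p q =>
          simp only [rTensor_tmul]
          rw [show ((TensorProduct.comm k H H).toLinearMap) (Coalgebra.comul p)
              = Coalgebra.comul (R := k) p from hcocomm p]
      simp only [lTensor_tmul]
      rw [inner]
  exact key _

lemma h4_elem (z : H ⊗[k] ((H ⊗[k] H) ⊗[k] H)) :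
    tensorTensorTensorComm k H H H H (Jmap k H z)
      = Jmap k H (lTensor H (rTensor H (TensorProduct.comm k H H).toLinearMap) z) := by
  induction z using TensorProduct.induction_on with
  | zero => simp
  | add u v hu hv => simp only [map_add, hu, hv]
  | tmul x yw =>
    induction yw using TensorProduct.induction_on with
    | zero => simp
    | add u v hu hv => simp only [map_add, tmul_add, hu, hv]
    | tmul Y w =>
      induction Y using TensorProduct.induction_on with
      | zero => simp
      | add u v hu hv => simp only [map_add, add_tmul, tmul_add, hu, hv]
      | tmul p q => rfl

include hcocomm in
lemma K_elem (a : H) :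
    tensorTensorTensorComm k H H H H
        (TensorProduct.map (Coalgebra.comul) (Coalgebra.comul) (Coalgebra.comul (R := k) a))
      = TensorProduct.map (Coalgebra.comul) (Coalgebra.comul) (Coalgebra.comul (R := k) a) := by
  rw [h1_elem, ← h2_elem, h4_elem, h3_elem k H hcocomm, h2_elem, ← h1_elem]

end Ksec

/-! ### The cyclic operator commutes with `ρ` -/

def Bact (act : H →ₗ[k] M →ₗ[k] M) (n : ℕ) :
    (H ⊗[k] H) ⊗[k] (TP k H n ⊗[k] M) →ₗ[k] (H ⊗[k] TP k H n) ⊗[k] M :=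
  TensorProduct.map LinearMap.id (TensorProduct.lift act)
    ∘ₗ (tensorTensorTensorComm k H H (TP k H n) M).toLinearMap

def tauAux (act : H →ₗ[k] M →ₗ[k] M) (n : ℕ) :
    (H ⊗[k] TP k H n) ⊗[k] M →ₗ[k] (H ⊗[k] TP k H n) ⊗[k] M :=
  Bact k H M act n
    ∘ₗ (TensorProduct.assoc k (H ⊗[k] H) (TP k H n) M).toLinearMap
    ∘ₗ rTensor M (rTensor (TP k H n) (Coalgebra.comul : H →ₗ[k] H ⊗[k] H))

lemma tau_eq (act : H →ₗ[k] M →ₗ[k] M) (n : ℕ) :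
    tauCy k H M Coalgebra.comul act n
      = tauAux k H M act n ∘ₗ rTensor M (lastSplit k H n) := rfl

lemma tauAux_tmul (act : H →ₗ[k] M →ₗ[k] M) (n : ℕ) (a : H) (t : TP k H n) (m : M) :
    tauAux k H M act n ((a ⊗ₜ[k] t) ⊗ₜ[k] m)
      = Bact k H M act n (Coalgebra.comul a ⊗ₜ[k] (t ⊗ₜ[k] m)) := rfl

lemma Bact_tmul (act : H →ₗ[k] M →ₗ[k] M) (n : ℕ) (x1 x2 : H) (t : TP k H n) (m : M) :
    Bact k H M act n ((x1 ⊗ₜ[k] x2) ⊗ₜ[k] (t ⊗ₜ[k] m))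
      = (x1 ⊗ₜ[k] t) ⊗ₜ[k] (act x2 m) := rfl

/-! ### `Phi` commutes with `lastSplit` -/

lemma lastSplit_succ_def (n : ℕ) :
    lastSplit k H (n + 1)
      = (TensorProduct.leftComm k H H (TP k H n)).toLinearMap
          ∘ₗ lTensor H (lastSplit k H n) := rfl

lemma lastSplit_succ_tmul (n : ℕ) (h : H) (v : TP k H (n + 1)) :
    lastSplit k H (n + 1) (h ⊗ₜ[k] v)
      = TensorProduct.leftComm k H H (TP k H n) (h ⊗ₜ[k] lastSplit k H n v) := rfl

lemma lastSplit_succ_tmul' (n : ℕ) (h : H) (v : TP k H (n + 1)) :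
    lastSplit k H (n + 1) ((h ⊗ₜ[k] v : H ⊗[k] TP k H (n + 1)))
      = TensorProduct.leftComm k H H (TP k H n) (h ⊗ₜ[k] lastSplit k H n v) := rfl

lemma ls_sub2 (n : ℕ) (X Y : H ⊗[k] H) (Z : TP k H n ⊗[k] TP k H n) :
    tensorTensorTensorComm k H H (TP k H (n + 1)) (TP k H (n + 1))
        (Y ⊗ₜ[k] tensorTensorTensorComm k H H (TP k H n) (TP k H n) (X ⊗ₜ[k] Z))
      = TensorProduct.map (TensorProduct.leftComm k H H (TP k H n)).toLinearMap
          (TensorProduct.leftComm k H H (TP k H n)).toLinearMap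
          (tensorTensorTensorComm k H H (H ⊗[k] TP k H n) (H ⊗[k] TP k H n)
            (X ⊗ₜ[k]
              tensorTensorTensorComm k H H (TP k H n) (TP k H n) (Y ⊗ₜ[k] Z))) := by
  induction X using TensorProduct.induction_on with
  | zero => simp; erw [tmul_zero, map_zero] <;> rfl
  | add u v hu hv =>
    simp only [map_add, add_tmul, tmul_add, hu, hv]
    rw [← hu, ← hv]
    exact (congrArg (tensorTensorTensorComm k H H (TP k H (n + 1)) (TP k H (n + 1))) (tmul_add _ _ _)).trans (map_add _ _ _)
  | tmul a b =>
    induction Y using TensorProduct.induction_on with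
    | zero => simp; erw [zero_tmul, map_zero] <;> rfl
    | add u v hu hv =>
      simp only [map_add, add_tmul, tmul_add, hu, hv]
      rw [← hu, ← hv]
      exact (congrArg (tensorTensorTensorComm k H H (TP k H (n + 1)) (TP k H (n + 1))) (add_tmul _ _ _)).trans (map_add _ _ _)
    | tmul a' b' =>
      induction Z using TensorProduct.induction_on with
      | zero => simp; erw [tmul_zero, map_zero] <;> rfl
      | add u v hu hv =>
        simp only [map_add, tmul_add, hu, hv]
        rw [← hu, ← hv]
        exact (congrArg (tensorTensorTensorComm k H H (TP k H (n + 1)) (TP k H (n + 1))) (tmul_add _ _ _)).trans (map_add _ _ _)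
      | tmul t1 t2 => rfl

lemma ls_sub1 (n : ℕ) (h : H) (W : H ⊗[k] TP k H n) :
    Phi k H (n + 2) (TensorProduct.leftComm k H H (TP k H n) (h ⊗ₜ[k] W))
      = TensorProduct.map (TensorProduct.leftComm k H H (TP k H n)).toLinearMap
          (TensorProduct.leftComm k H H (TP k H n)).toLinearMap
          (tensorTensorTensorComm k H H (H ⊗[k] TP k H n) (H ⊗[k] TP k H n)
            (Coalgebra.comul h ⊗ₜ[k] Phi k H (n + 1) W)) := by
  induction W using TensorProduct.induction_on with
  | zero => simp; erw [map_zero] <;> rfl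
  | add u v hu hv =>
    simp only [map_add, tmul_add, hu, hv]
    refine (map_add _ _ _).trans ?_
    rw [hu, hv]
    erw [map_add (Phi k H (n + 1)) u v, tmul_add, map_add, map_add] <;> rfl
  | tmul a t =>
    rw [TensorProduct.leftComm_tmul, Phi_succ_tmul2, Phi_succ_tmul', Phi_succ_tmul']
    exact ls_sub2 k H n (Coalgebra.comul h) (Coalgebra.comul a) (Phi k H n t)

lemma ls_sub4 (n : ℕ) (X : H ⊗[k] H) (Z : TP k H (n + 1) ⊗[k] TP k H (n + 1)) :
    TensorProduct.map (lastSplit k H (n + 1)) (lastSplit k H (n + 1))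
        (tensorTensorTensorComm k H H (TP k H (n + 1)) (TP k H (n + 1)) (X ⊗ₜ[k] Z))
      = TensorProduct.map (TensorProduct.leftComm k H H (TP k H n)).toLinearMap
          (TensorProduct.leftComm k H H (TP k H n)).toLinearMap
          (tensorTensorTensorComm k H H (H ⊗[k] TP k H n) (H ⊗[k] TP k H n)
            (X ⊗ₜ[k]
              TensorProduct.map (lastSplit k H n) (lastSplit k H n) Z)) := by
  induction X using TensorProduct.induction_on with
  | zero => simp; erw [map_zero] <;> rfl
  | add u v hu hv =>
    simp only [map_add, add_tmul, hu, hv]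
    rw [← hu, ← hv]
    exact map_add _ _ _
  | tmul x1 x2 =>
    induction Z using TensorProduct.induction_on with
    | zero => simp; erw [map_zero] <;> rfl
    | add u v hu hv =>
      simp only [map_add, tmul_add, hu, hv]
      rw [← hu, ← hv]
      exact map_add _ _ _
    | tmul z1 z2 =>
      simp only [tensorTensorTensorComm_tmul, map_tmul]
      erw [map_tmul]
      rw [lastSplit_succ_tmul', lastSplit_succ_tmul'] <;> rfl

lemma lsCompat : ∀ (n : ℕ) (u : TP k H (n + 1)),
    Phi k H (n + 1) (lastSplit k H n u)
      = TensorProduct.map (lastSplit k H n) (lastSplit k H n) (Phi k H (n + 1) u)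
  | 0, u => by
      erw [show lastSplit k H 0 = LinearMap.id from rfl, TensorProduct.map_id]
      rfl
  | n + 1, u => by
      have key : ∀ x : H ⊗[k] TP k H (n + 1),
          Phi k H (n + 2) (lastSplit k H (n + 1) x)
            = TensorProduct.map (lastSplit k H (n + 1)) (lastSplit k H (n + 1))
                (Phi k H (n + 2) x) := by
        intro x
        induction x using TensorProduct.induction_on with
        | zero => erw [map_zero] <;> rfl
        | add u v hu hv =>
          refine (congrArg (Phi k H (n + 2)) (map_add (lastSplit k H (n + 1)) u v)).trans ?_
          refine (map_add _ _ _).trans ?_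
          exact (congrArg₂ (· + ·) hu hv).trans ((map_add (TensorProduct.map (lastSplit k H (n + 1))
            (lastSplit k H (n + 1))) _ _).symm.trans (congrArg (TensorProduct.map (lastSplit k H (n + 1))
              (lastSplit k H (n + 1))) (map_add (Phi k H (n + 2)) u v).symm))
        | tmul h v =>
          rw [lastSplit_succ_tmul', Phi_succ_tmul', ls_sub4, ← lsCompat n v]
          exact ls_sub1 k H n h (lastSplit k H n v)
      exact key u

/-! ### The core computation for the cyclic operator -/

def Gbig (act : H →ₗ[k] M →ₗ[k] M) (n : ℕ) :
    ((H ⊗[k] H) ⊗[k] (H ⊗[k] H)) ⊗[k] ((TP k H n ⊗[k] TP k H n) ⊗[k] (M ⊗[k] M))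
      →ₗ[k] ((H ⊗[k] TP k H n) ⊗[k] M) ⊗[k] ((H ⊗[k] TP k H n) ⊗[k] M) :=
  TensorProduct.map (Bact k H M act n) (Bact k H M act n)
    ∘ₗ (tensorTensorTensorComm k (H ⊗[k] H) (H ⊗[k] H)
          (TP k H n ⊗[k] M) (TP k H n ⊗[k] M)).toLinearMap
    ∘ₗ lTensor ((H ⊗[k] H) ⊗[k] (H ⊗[k] H))
        (tensorTensorTensorComm k (TP k H n) (TP k H n) M M).toLinearMap

lemma tensorLAct_tmul (act : H →ₗ[k] M →ₗ[k] M) (v1 v2 : H) (p1 p2 : M) :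
    tensorLAct k H H M M act act (v1 ⊗ₜ[k] v2) (p1 ⊗ₜ[k] p2)
      = act v1 p1 ⊗ₜ[k] act v2 p2 := rfl

lemma lemL' (act : H →ₗ[k] M →ₗ[k] M) (n : ℕ) (Y1 Y2 : H ⊗[k] H)
    (z : TP k H n ⊗[k] TP k H n) (p : M ⊗[k] M) :
    tensorTensorTensorComm k (H ⊗[k] TP k H n) (H ⊗[k] TP k H n) M M
        ((tensorTensorTensorComm k H H (TP k H n) (TP k H n) (Y1 ⊗ₜ[k] z)) ⊗ₜ[k]
          tensorLAct k H H M M act act Y2 p)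
      = Gbig k H M act n
          ((tensorTensorTensorComm k H H H H (Y1 ⊗ₜ[k] Y2)) ⊗ₜ[k] (z ⊗ₜ[k] p)) := by
  induction Y1 using TensorProduct.induction_on with
  | zero => simp
  | add u v hu hv => simp only [map_add, add_tmul, hu, hv]
  | tmul u1 u2 =>
    induction Y2 using TensorProduct.induction_on with
    | zero => simp
    | add u v hu hv => simp only [map_add, add_tmul, tmul_add, LinearMap.add_apply, hu, hv]
    | tmul v1 v2 =>
      induction z using TensorProduct.induction_on with
      | zero => simp
      | add u v hu hv => simp only [map_add, add_tmul, tmul_add, hu, hv]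
      | tmul z1 z2 =>
        induction p using TensorProduct.induction_on with
        | zero => simp
        | add u v hu hv => simp only [map_add, tmul_add, hu, hv]
        | tmul p1 p2 => rfl

lemma lemR (act : H →ₗ[k] M →ₗ[k] M) (n : ℕ) (X : H ⊗[k] H)
    (z : TP k H n ⊗[k] TP k H n) (p : M ⊗[k] M) :
    TensorProduct.map (tauAux k H M act n) (tauAux k H M act n)
        (tensorTensorTensorComm k (H ⊗[k] TP k H n) (H ⊗[k] TP k H n) M M
          ((tensorTensorTensorComm k H H (TP k H n) (TP k H n) (X ⊗ₜ[k] z)) ⊗ₜ[k] p))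
      = Gbig k H M act n
          ((TensorProduct.map Coalgebra.comul Coalgebra.comul X) ⊗ₜ[k] (z ⊗ₜ[k] p)) := by
  induction X using TensorProduct.induction_on with
  | zero => simp
  | add u v hu hv => simp only [map_add, add_tmul, hu, hv]
  | tmul x1 x2 =>
    induction z using TensorProduct.induction_on with
    | zero => simp
    | add u v hu hv => simp only [map_add, add_tmul, tmul_add, hu, hv]
    | tmul z1 z2 =>
      induction p using TensorProduct.induction_on with
      | zero => simp
      | add u v hu hv => simp only [map_add, tmul_add, hu, hv]
      | tmul p1 p2 => rfl

lemma lemLfull (act : H →ₗ[k] M →ₗ[k] M) (ψ : M →ₗ[k] M ⊗[k] M)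
    (hψ : ∀ (h : H) (m : M),
      ψ (act h m) = tensorLAct k H H M M act act (Coalgebra.comul h) (ψ m))
    (n : ℕ) (X : H ⊗[k] H) (t : TP k H n) (m : M) :
    rhoPreCy k H M ψ n (Bact k H M act n (X ⊗ₜ[k] (t ⊗ₜ[k] m)))
      = Gbig k H M act n
          ((tensorTensorTensorComm k H H H H
              (TensorProduct.map Coalgebra.comul Coalgebra.comul X)) ⊗ₜ[k]
            (Phi k H n t ⊗ₜ[k] ψ m)) := by
  induction X using TensorProduct.induction_on with
  | zero => simp; erw [map_zero] <;> rfl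
  | add u v hu hv => simp only [map_add, add_tmul, hu, hv]; erw [map_add, hu, hv] <;> rfl
  | tmul x1 x2 =>
    erw [Bact_tmul, rho_apply', Phi_succ_tmul, hψ, TensorProduct.map_tmul, lemL'] <;> rfl

lemma taucore (hcocomm : ∀ h : H,
      TensorProduct.comm k H H (Coalgebra.comul h) = Coalgebra.comul h)
    (act : H →ₗ[k] M →ₗ[k] M) (ψ : M →ₗ[k] M ⊗[k] M)
    (hψ : ∀ (h : H) (m : M),
      ψ (act h m) = tensorLAct k H H M M act act (Coalgebra.comul h) (ψ m))
    (n : ℕ) (w : H ⊗[k] TP k H n) (m : M) :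
    rhoPreCy k H M ψ n (tauAux k H M act n (w ⊗ₜ[k] m))
      = TensorProduct.map (tauAux k H M act n) (tauAux k H M act n)
          (tensorTensorTensorComm k (H ⊗[k] TP k H n) (H ⊗[k] TP k H n) M M
            (Phi k H (n + 1) w ⊗ₜ[k] ψ m)) := by
  induction w using TensorProduct.induction_on with
  | zero => simp; erw [map_zero, map_zero, zero_tmul, map_zero] <;> rfl
  | add u v hu hv =>
    simp only [map_add, add_tmul, hu, hv]
    refine (map_add _ _ _).trans ?_
    rw [hu, hv]
    erw [map_add (Phi k H (n + 1)) u v, add_tmul, map_add, map_add] <;> rfl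
  | tmul a t =>
    rw [tauAux_tmul, lemLfull k H M act ψ hψ n, K_elem k H hcocomm,
      Phi_succ_tmul', ← lemR]

lemma tau_comm (hcocomm : ∀ h : H,
      TensorProduct.comm k H H (Coalgebra.comul h) = Coalgebra.comul h)
    (act : H →ₗ[k] M →ₗ[k] M) (ψ : M →ₗ[k] M ⊗[k] M)
    (hψ : ∀ (h : H) (m : M),
      ψ (act h m) = tensorLAct k H H M M act act (Coalgebra.comul h) (ψ m))
    (n : ℕ) :
    rhoPreCy k H M ψ n ∘ₗ tauCy k H M Coalgebra.comul act n
      = TensorProduct.map (tauCy k H M Coalgebra.comul act n)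
          (tauCy k H M Coalgebra.comul act n) ∘ₗ rhoPreCy k H M ψ n := by
  apply TensorProduct.ext'
  intro u m
  simp only [comp_apply]
  rw [show tauCy k H M Coalgebra.comul act n (u ⊗ₜ[k] m)
      = tauAux k H M act n ((lastSplit k H n u) ⊗ₜ[k] m) from rfl]
  rw [taucore k H M hcocomm act ψ hψ n, lsCompat k H n u, ttt_map_l,
    ← rho_apply, ← comp_apply (TensorProduct.map _ _), ← TensorProduct.map_comp]
  rfl

lemma face_comm_gt (hcocomm : ∀ h : H,
      TensorProduct.comm k H H (Coalgebra.comul h) = Coalgebra.comul h)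
    (act : H →ₗ[k] M →ₗ[k] M) (ψ : M →ₗ[k] M ⊗[k] M)
    (hψ : ∀ (h : H) (m : M),
      ψ (act h m) = tensorLAct k H H M M act act (Coalgebra.comul h) (ψ m))
    (n : ℕ) (i : Fin (n + 2)) (hi : ¬ i.val ≤ n) :
    rhoPreCy k H M ψ n ∘ₗ faceCy k H M Coalgebra.comul act n i
      = TensorProduct.map (faceCy k H M Coalgebra.comul act n i)
          (faceCy k H M Coalgebra.comul act n i) ∘ₗ rhoPreCy k H M ψ (n + 1) := by
  rw [faceCy, dif_neg hi]
  rw [← LinearMap.comp_assoc,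
    rho_compat k H M ψ (n + 1) n (mulAt k H n ⟨0, by omega⟩)
      (compat_mulAt k H n ⟨0, by omega⟩),
    LinearMap.comp_assoc, tau_comm k H M hcocomm act ψ hψ (n + 1),
    ← LinearMap.comp_assoc, ← TensorProduct.map_comp]
/-- Let `H` be cocommutative, `M` a left-left SAYD module over `H`,
and `ψ : M → M ⊗ M` with `ψ(h·m) = Δ(h)·ψ(m)`.  Then `ρₙ = Ωₙ ∘ (Δ^{⊗(n+1)} ⊗ ψ)`
commutes with all faces, degeneracies and cyclic operators, hence defines a map of
cyclic modules `C̃(H,M) → C̃(H,M) × C̃(H,M)`. -/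
theorem rho_cyclic_map
    (hcocomm : ∀ h : H, TensorProduct.comm k H H (Coalgebra.comul h) = Coalgebra.comul h)
    (act : H →ₗ[k] M →ₗ[k] M) (coact : M →ₗ[k] H ⊗[k] M)
    (hact : IsLeftAction k H M act)
    (hcoact : IsLeftCoaction k H M (Coalgebra.comul) (Coalgebra.counit) coact)
    (hayd : IsLLAYD k H M (Coalgebra.comul) (HopfAlgebra.antipode k) act coact)
    (hstable : IsLLStable k H M act coact)
    (ψ : M →ₗ[k] M ⊗[k] M)
    (hψ : ∀ (h : H) (m : M),
      ψ (act h m)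
        = tensorLAct k H H M M act act (Coalgebra.comul h) (ψ m)) :
    -- `ρ` commutes with all faces (including the last face)
    (∀ (n : ℕ) (i : Fin (n + 2)),
      rhoPreCy k H M ψ n ∘ₗ faceCy k H M (Coalgebra.comul) act n i
        = TensorProduct.map (faceCy k H M (Coalgebra.comul) act n i)
            (faceCy k H M (Coalgebra.comul) act n i) ∘ₗ rhoPreCy k H M ψ (n + 1))
    -- `ρ` commutes with all degeneracies
    ∧ (∀ (n : ℕ) (i : Fin (n + 1)),
      rhoPreCy k H M ψ (n + 1) ∘ₗ degenCy k H M n i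
        = TensorProduct.map (degenCy k H M n i) (degenCy k H M n i)
            ∘ₗ rhoPreCy k H M ψ n)
    -- `ρ` commutes with the cyclic operators
    ∧ (∀ n : ℕ,
      rhoPreCy k H M ψ n ∘ₗ tauCy k H M (Coalgebra.comul) act n
        = TensorProduct.map (tauCy k H M (Coalgebra.comul) act n)
            (tauCy k H M (Coalgebra.comul) act n) ∘ₗ rhoPreCy k H M ψ n) := by
  refine ⟨?_, ?_, ?_⟩
  · intro n i
    by_cases hi : i.val ≤ n
    · exact face_comm_le k H M ψ act n i hi
    · exact face_comm_gt k H M hcocomm act ψ hψ n i hi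
  · intro n i
    exact degen_comm k H M ψ n i
  · intro n
    exact tau_comm k H M hcocomm act ψ hψ n

end
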